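/- Let p ≤ k be positive integers, let ρ ≥ 1 be a real number, let v¹,…,vⁿ ∈ ℝ^p, and let m ∈ ℤⁿ with mᵢ ≥ 0 and Σᵢ mᵢ = k. Set S = Σᵢ mᵢ vⁱ(vⁱ)ᵀ and assume S is invertible. Suppose that for every index i with mᵢ > 0 and every j ∈ {1,…,n} one has det(S − vⁱ(vⁱ)ᵀ + vʲ(vʲ)ᵀ) ≤ ρ·det(S). Then for every λ ∈ ℝⁿ with λᵢ ≥ 0 and Σᵢ λᵢ = k, one has det(Σᵢ λᵢ vⁱ(vⁱ)ᵀ) · ((k−p+1)/k · p/(p + k(ρ−1)))^p ≤ det(S). -/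

import Mathlib

open Matrix BigOperators

lemma vecMulVec_posSemidef' {p : ℕ} (u : Fin p → ℝ) : (vecMulVec u u).PosSemidef := by
  rw [vecMulVec_eq (Fin 1)]
  have : replicateRow (Fin 1) u = (replicateCol (Fin 1) u)ᴴ := by
    ext i j; simp [Matrix.conjTranspose, Matrix.replicateRow, Matrix.replicateCol]
  rw [this]
  exact posSemidef_self_mul_conjTranspose _

lemma smul_posSemidef' {p : ℕ} {c : ℝ} (hc : 0 ≤ c) {M : Matrix (Fin p) (Fin p) ℝ}
    (hM : M.PosSemidef) : (c • M).PosSemidef := by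
  constructor
  · unfold Matrix.IsHermitian
    rw [conjTranspose_smul, hM.1]
    simp
  · intro x
    refine le_of_le_of_eq (mul_nonneg hc (hM.2 x)) ?_
    simp only [Finsupp.mul_sum]
    apply Finsupp.sum_congr; intro i _
    apply Finsupp.sum_congr; intro j _
    simp only [Matrix.smul_apply, smul_eq_mul]; ring

lemma sum_posSemidef' {p n : ℕ} (f : Fin n → Matrix (Fin p) (Fin p) ℝ)
    (hf : ∀ i, (f i).PosSemidef) : (∑ i, f i).PosSemidef := by
  classical
  induction (Finset.univ : Finset (Fin n)) using Finset.induction with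
  | empty => simpa using Matrix.PosSemidef.zero
  | insert _ _ h ih => rw [Finset.sum_insert h]; exact (hf _).add ih

lemma trace_mul_vecMulVec' {p : ℕ} (A : Matrix (Fin p) (Fin p) ℝ) (u : Fin p → ℝ) :
    (A * vecMulVec u u).trace = u ⬝ᵥ A *ᵥ u := by
  simp only [Matrix.trace, Matrix.diag, mul_apply, vecMulVec_apply, dotProduct, mulVec,
    dotProduct, Finset.mul_sum]
  apply Finset.sum_congr rfl; intro i _
  apply Finset.sum_congr rfl; intro j _
  ring

lemma herm_trace_eq_sum' {p : ℕ} {M : Matrix (Fin p) (Fin p) ℝ} (hM : M.IsHermitian) :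
    M.trace = ∑ i, hM.eigenvalues i := by
  conv_lhs => rw [hM.spectral_theorem, Unitary.conjStarAlgAut_apply]
  rw [Matrix.trace_mul_cycle]
  have h1 : (star (hM.eigenvectorUnitary : Matrix (Fin p) (Fin p) ℝ)) *
      (hM.eigenvectorUnitary : Matrix (Fin p) (Fin p) ℝ) = 1 := by
    exact Matrix.UnitaryGroup.star_mul_self _
  rw [h1, one_mul]
  simp [Matrix.trace_diagonal]

lemma psd_det_nonneg' {p : ℕ} {M : Matrix (Fin p) (Fin p) ℝ} (hM : M.PosSemidef) :
    0 ≤ M.det := by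
  have h := hM.1.det_eq_prod_eigenvalues
  rw [h]
  exact Finset.prod_nonneg fun i _ => by simpa using hM.eigenvalues_nonneg i

lemma psd_det_le_pow' {p : ℕ} (hp : 0 < p) {M : Matrix (Fin p) (Fin p) ℝ} (hM : M.PosSemidef) :
    M.det ≤ (M.trace / p) ^ p := by
  have hev := fun i => hM.eigenvalues_nonneg i
  have hdet := hM.1.det_eq_prod_eigenvalues
  have htr := herm_trace_eq_sum' hM.1
  set μ := hM.1.eigenvalues with hμ
  have hgm : ∏ i, μ i ^ ((p : ℝ)⁻¹) ≤ ∑ i, (p : ℝ)⁻¹ * μ i := by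
    apply Real.geom_mean_le_arith_mean_weighted
    · intro i _; positivity
    · simp [Finset.card_univ]; field_simp
    · intro i _; exact hev i
  have hrhs : ∑ i, (p : ℝ)⁻¹ * μ i = M.trace / p := by
    rw [← Finset.mul_sum, htr]; ring
  have hpow : (∏ i, μ i ^ ((p : ℝ)⁻¹)) ^ p = ∏ i, μ i := by
    rw [← Finset.prod_pow]
    apply Finset.prod_congr rfl; intro i _
    rw [← Real.rpow_natCast (μ i ^ ((p:ℝ)⁻¹)) p, ← Real.rpow_mul (hev i)]
    field_simp; simp
  calc M.det = (∏ i, μ i ^ ((p : ℝ)⁻¹)) ^ p := by rw [hpow, hdet]; simp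
    _ ≤ (M.trace / p) ^ p := by
        apply pow_le_pow_left₀ _ (hgm.trans_eq hrhs)
        exact Finset.prod_nonneg fun i _ => Real.rpow_nonneg (hev i) _

lemma det_rank_two_update' {p : ℕ} (S A : Matrix (Fin p) (Fin p) ℝ)
    (hSA : S * A = 1) (a b : Fin p → ℝ) :
    (S - vecMulVec a a + vecMulVec b b).det
      = S.det * ((1 - a ⬝ᵥ A *ᵥ a) * (1 + b ⬝ᵥ A *ᵥ b) + (a ⬝ᵥ A *ᵥ b) * (b ⬝ᵥ A *ᵥ a)) := by
  set U : Matrix (Fin p) (Fin 2) ℝ := Matrix.of (fun r c => if c = 0 then -(a r) else b r) with hU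
  set W : Matrix (Fin 2) (Fin p) ℝ := Matrix.of (fun c r => if c = 0 then a r else b r) with hW
  have h1 : S - vecMulVec a a + vecMulVec b b = S + U * W := by
    ext r c
    simp [hU, hW, mul_apply, Fin.sum_univ_two, vecMulVec_apply, Matrix.sub_apply,
      Matrix.add_apply]
    ring
  have h2 : S + U * W = S * (1 + A * (U * W)) := by
    rw [Matrix.mul_add, Matrix.mul_one, ← Matrix.mul_assoc, hSA, Matrix.one_mul]
  have h3 : (1 + W * (A * U) : Matrix (Fin 2) (Fin 2) ℝ)
      = !![1 - a ⬝ᵥ A *ᵥ a, a ⬝ᵥ A *ᵥ b; -(b ⬝ᵥ A *ᵥ a), 1 + b ⬝ᵥ A *ᵥ b] := by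
    ext i j
    fin_cases i <;> fin_cases j <;>
      simp [hU, hW, mul_apply, mulVec, dotProduct, Matrix.one_apply, Finset.mul_sum] <;>
      first
        | ring
        | (rw [Finset.sum_comm]; ring)
        | (rw [Finset.sum_comm]; apply Finset.sum_congr rfl; intro x _;
           rw [Finset.mul_sum]; apply Finset.sum_congr rfl; intro y _; ring)
        | (apply Finset.sum_congr rfl; intro x _;
           rw [Finset.mul_sum]; apply Finset.sum_congr rfl; intro y _; ring)
  rw [h1, h2, Matrix.det_mul, ← Matrix.mul_assoc, Matrix.det_one_add_mul_comm, h3,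
    Matrix.det_fin_two]
  simp

lemma dot_vecMulVec_mulVec' {p : ℕ} (a w : Fin p → ℝ) :
    w ⬝ᵥ (vecMulVec a a *ᵥ w) = (a ⬝ᵥ w) ^ 2 := by
  have h : vecMulVec a a *ᵥ w = (a ⬝ᵥ w) • a := by
    ext r
    simp only [mulVec, vecMulVec_apply, dotProduct, Pi.smul_apply, smul_eq_mul,
      Finset.sum_mul, Finset.mul_sum]
    apply Finset.sum_congr rfl; intro c _
    ring
  rw [h, dotProduct_smul, smul_eq_mul, dotProduct_comm, sq]

/-- Theorem 1 of the paper: a ρ-approximate local optimum of the D-optimal design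
problem is within a factor of the optimum of the continuous relaxation. -/
theorem approx_local_search_guarantee
    (p k n : ℕ) (hp : 0 < p) (hpk : p ≤ k) (ρ : ℝ) (hρ : 1 ≤ ρ)
    (v : Fin n → Fin p → ℝ) (m : Fin n → ℤ) (hm : ∀ i, 0 ≤ m i)
    (hmk : ∑ i, m i = (k : ℤ))
    (S : Matrix (Fin p) (Fin p) ℝ)
    (hS : S = ∑ i, (m i : ℝ) • vecMulVec (v i) (v i))
    (hSinv : IsUnit S.det)
    (hlocal : ∀ i, 0 < m i → ∀ j,
      (S - vecMulVec (v i) (v i) + vecMulVec (v j) (v j)).det ≤ ρ * S.det) :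
    ∀ lam : Fin n → ℝ, (∀ i, 0 ≤ lam i) → (∑ i, lam i) = (k : ℝ) →
      (∑ i, lam i • vecMulVec (v i) (v i)).det *
        (((k : ℝ) - p + 1) / k * (p / (p + k * (ρ - 1)))) ^ p ≤ S.det := by
  intro lam hlam hlamk
  have hkpos : 0 < k := lt_of_lt_of_le hp hpk
  have hk0 : (0:ℝ) < k := by exact_mod_cast hkpos
  have hp0 : (0:ℝ) < p := by exact_mod_cast hp
  have hpk' : (p:ℝ) ≤ k := by exact_mod_cast hpk
  have hkp1 : (0:ℝ) < (k:ℝ) - p + 1 := by linarith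
  have hden : (0:ℝ) < (p:ℝ) + k * (ρ - 1) := by nlinarith
  set τmax : ℝ := ((p:ℝ) + k * (ρ - 1)) / ((k:ℝ) - p + 1) with hτmax_def
  set A := S⁻¹ with hA
  have hSA : S * A = 1 := mul_nonsing_inv S hSinv
  have hAS : A * S = 1 := nonsing_inv_mul S hSinv
  have hSpsd : S.PosSemidef := by
    rw [hS]
    exact sum_posSemidef' _ fun i =>
      smul_posSemidef' (by exact_mod_cast hm i) (vecMulVec_posSemidef' (v i))
  have hApsd : A.PosSemidef := hSpsd.inv
  have hdetpos : 0 < S.det := lt_of_le_of_ne (psd_det_nonneg' hSpsd) (Ne.symm hSinv.ne_zero)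
  set t : Fin n → ℝ := fun i => v i ⬝ᵥ A *ᵥ v i with ht
  set s : Fin n → Fin n → ℝ := fun i j => v i ⬝ᵥ A *ᵥ v j with hs
  have ht_nonneg : ∀ i, 0 ≤ t i := fun i => by simpa [ht] using hApsd.dotProduct_mulVec_nonneg (v i)
  have hAsymm : Aᵀ = A := by
    calc Aᵀ = Aᴴ := by ext a b; simp [conjTranspose_apply]
    _ = A := hApsd.1
  have hs_symm : ∀ i j, s j i = s i j := by
    intro i j
    simp only [hs]
    conv_lhs => rw [Matrix.dotProduct_mulVec, ← hAsymm, Matrix.vecMul_transpose]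
    exact dotProduct_comm _ _
  -- local step inequality
  have hstep : ∀ i, 0 < m i → ∀ j,
      (1 - t i) * (1 + t j) + s i j * s j i ≤ ρ := by
    intro i hi j
    have h := hlocal i hi j
    rw [det_rank_two_update' S A hSA (v i) (v j)] at h
    simp only [ht, hs]
    nlinarith [h, hdetpos]
  have htrace_sum : ∀ c : Fin n → ℝ,
      (A * ∑ i, c i • vecMulVec (v i) (v i)).trace = ∑ i, c i * t i := by
    intro c
    rw [Matrix.mul_sum, Matrix.trace_sum]
    apply Finset.sum_congr rfl; intro i _
    rw [Matrix.mul_smul, Matrix.trace_smul, trace_mul_vecMulVec']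
    simp [ht, smul_eq_mul]
  have hmcast : ∑ i, ((m i : ℝ)) = (k:ℝ) := by exact_mod_cast hmk
  have hsum_mt : ∑ i, (m i : ℝ) * t i = (p:ℝ) := by
    have h := htrace_sum (fun i => (m i : ℝ))
    rw [← hS, hAS, Matrix.trace_one] at h
    simpa using h.symm
  have hsum_ms : ∀ j, ∑ i, (m i : ℝ) * (s i j * s j i) = t j := by
    intro j
    have hw : S *ᵥ (A *ᵥ v j) = v j := by
      rw [Matrix.mulVec_mulVec, hSA, Matrix.one_mulVec]
    calc ∑ i, (m i : ℝ) * (s i j * s j i)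
        = ∑ i, (m i : ℝ) * ((v i ⬝ᵥ (A *ᵥ v j)) ^ 2) := by
          apply Finset.sum_congr rfl; intro i _
          rw [hs_symm i j]
          simp only [hs, sq]
      _ = (S * vecMulVec (A *ᵥ v j) (A *ᵥ v j)).trace := by
          rw [hS, Matrix.sum_mul, Matrix.trace_sum]
          apply Finset.sum_congr rfl; intro i _
          rw [smul_mul_assoc, Matrix.trace_smul, trace_mul_vecMulVec',
            dot_vecMulVec_mulVec']
          simp [smul_eq_mul]
      _ = t j := by
          rw [trace_mul_vecMulVec', hw, dotProduct_comm]
  have htmax : ∀ j, t j ≤ τmax := by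
    intro j
    have key : ∑ i, (m i:ℝ) * ((1 - t i) * (1 + t j) + s i j * s j i)
        ≤ ∑ i, (m i:ℝ) * ρ := by
      apply Finset.sum_le_sum
      intro i _
      rcases eq_or_lt_of_le (hm i) with h0 | h0
      · rw [show (m i : ℝ) = 0 by exact_mod_cast h0.symm]; simp
      · exact mul_le_mul_of_nonneg_left (hstep i h0 j) (by exact_mod_cast (hm i))
    have expand : ∑ i, (m i:ℝ) * ((1 - t i) * (1 + t j) + s i j * s j i)
        = (1 + t j) * ((k:ℝ) - p) + t j := by
      have e1 : ∑ i, (m i:ℝ) * ((1 - t i) * (1 + t j) + s i j * s j i)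
          = (∑ i, ((m i:ℝ) - (m i:ℝ) * t i)) * (1 + t j)
            + ∑ i, (m i:ℝ) * (s i j * s j i) := by
        rw [Finset.sum_mul, ← Finset.sum_add_distrib]
        apply Finset.sum_congr rfl; intro i _; ring
      rw [e1, Finset.sum_sub_distrib, hmcast, hsum_mt, hsum_ms j]
      ring
    have hkρ : ∑ i, (m i:ℝ) * ρ = (k:ℝ) * ρ := by rw [← Finset.sum_mul, hmcast]
    rw [expand, hkρ] at key
    rw [hτmax_def, le_div_iff₀ hkp1]
    nlinarith [key]
  -- final part
  set L := ∑ i, lam i • vecMulVec (v i) (v i) with hL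
  have hLpsd : L.PosSemidef := sum_posSemidef' _ fun i =>
    smul_posSemidef' (hlam i) (vecMulVec_posSemidef' (v i))
  open scoped MatrixOrder in set B := CFC.sqrt A with hB
  open scoped MatrixOrder in have hBpsd := (CFC.sqrt_nonneg A).posSemidef
  open scoped MatrixOrder in have hBB : B * B = A := CFC.sqrt_mul_sqrt_self A hApsd.nonneg
  have hMpsd : (B * L * B).PosSemidef := by
    have h := hLpsd.mul_mul_conjTranspose_same B
    rwa [hBpsd.1] at h
  have hdetA1 : S.det * A.det = 1 := by rw [← Matrix.det_mul, hSA, Matrix.det_one]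
  have hdetA : A.det = S.det⁻¹ := eq_inv_of_mul_eq_one_left
    (by rw [mul_comm]; exact hdetA1)
  have hMdet : (B * L * B).det = S.det⁻¹ * L.det := by
    rw [Matrix.det_mul, Matrix.det_mul,
      show B.det * L.det * B.det = (B.det * B.det) * L.det from by ring,
      ← Matrix.det_mul, hBB, hdetA]
  have hMtr : (B * L * B).trace = ∑ i, lam i * t i := by
    rw [Matrix.trace_mul_cycle, hBB, hL]
    exact htrace_sum lam
  have htr_nonneg : 0 ≤ (B * L * B).trace := by
    rw [hMtr]; exact Finset.sum_nonneg fun i _ => mul_nonneg (hlam i) (ht_nonneg i)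
  have htr_le : (B * L * B).trace ≤ (k:ℝ) * τmax := by
    rw [hMtr]
    calc ∑ i, lam i * t i ≤ ∑ i, lam i * τmax :=
        Finset.sum_le_sum fun i _ => mul_le_mul_of_nonneg_left (htmax i) (hlam i)
      _ = (k:ℝ) * τmax := by rw [← Finset.sum_mul, hlamk]
  have hMdet_le : (B * L * B).det ≤ ((k:ℝ) * τmax / p) ^ p := by
    refine (psd_det_le_pow' hp hMpsd).trans ?_
    apply pow_le_pow_left₀ (div_nonneg htr_nonneg hp0.le)
    gcongr
  have hLdet : L.det = (B * L * B).det * S.det := by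
    rw [hMdet]
    field_simp
  set c : ℝ := ((k : ℝ) - p + 1) / k * ((p:ℝ) / (p + k * (ρ - 1))) with hc
  have hc_nonneg : 0 ≤ c := mul_nonneg (div_nonneg (by linarith) hk0.le)
    (div_nonneg hp0.le hden.le)
  have hcc : (k:ℝ) * τmax / p * c = 1 := by
    rw [hτmax_def, hc]
    field_simp
  calc L.det * c ^ p = S.det * ((B * L * B).det * c ^ p) := by rw [hLdet]; ring
    _ ≤ S.det * (((k:ℝ) * τmax / p) ^ p * c ^ p) := by
        apply mul_le_mul_of_nonneg_left _ hdetpos.le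
        exact mul_le_mul_of_nonneg_right hMdet_le (pow_nonneg hc_nonneg p)
    _ = S.det * (((k:ℝ) * τmax / p * c) ^ p) := by rw [← mul_pow]
    _ = S.det := by rw [hcc]; simp
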